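/- For the Tribonacci sequence T with T(0)=0, T(1)=1, T(2)=1, and any k ≥ 5: 8·∑_{j=0}^{k} T(j)² = 9·T(k)² + 7·T(k−1)² + 4·T(k−2)² − 2·T(k−3)² − T(k−4)² − T(k−5)² + 2. -/

import Mathlib

open Finset

theorem stmt10 (T : ℕ → ℕ) (h0 : T 0 = 0) (h1 : T 1 = 1) (h2 : T 2 = 1) (hT : ∀ n, 3 ≤ n → T n = T (n-1) + T (n-2) + T (n-3)) :
    ∀ k, 5 ≤ k → 8*∑ j ∈ range (k+1), ((T j : ℤ))^2 = 9*(T k : ℤ)^2 + 7*(T (k-1) : ℤ)^2 + 4*(T (k-2) : ℤ)^2 - 2*(T (k-3) : ℤ)^2 - (T (k-4) : ℤ)^2 - (T (k-5) : ℤ)^2 + 2 := by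
  have h3 : T 3 = 2 := by rw [hT 3 (by norm_num)]; simp [h0, h1, h2]
  have h4 : T 4 = 4 := by rw [hT 4 (by norm_num)]; simp [h1, h2, h3]
  have h5 : T 5 = 7 := by rw [hT 5 (by norm_num)]; simp [h2, h3, h4]
  intro k hk
  induction k, hk using Nat.le_induction with
  | base =>
    simp [Finset.sum_range_succ, h0, h1, h2, h3, h4, h5]
  | succ k hk ih =>
    have e1 : k+1-1 = k := by omega
    have e2 : k+1-2 = k-1 := by omega
    have e3 : k+1-3 = k-2 := by omega
    have e4 : k+1-4 = k-3 := by omega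
    have e5 : k+1-5 = k-4 := by omega
    rw [e1, e2, e3, e4, e5, Finset.sum_range_succ]
    have hg : (T (k+1) : ℤ) = T k + T (k-1) + T (k-2) := by
      have := hT (k+1) (by omega)
      rw [show k+1-1 = k by omega, show k+1-2 = k-1 by omega,
        show k+1-3 = k-2 by omega] at this
      exact_mod_cast this
    have ha : (T k : ℤ) = T (k-1) + T (k-2) + T (k-3) := by
      have := hT k (by omega)
      exact_mod_cast this
    have hb : (T (k-1) : ℤ) = T (k-2) + T (k-3) + T (k-4) := by
      have := hT (k-1) (by omega)
      rw [show k-1-1 = k-2 by omega, show k-1-2 = k-3 by omega,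
        show k-1-3 = k-4 by omega] at this
      exact_mod_cast this
    have hc : (T (k-2) : ℤ) = T (k-3) + T (k-4) + T (k-5) := by
      have := hT (k-2) (by omega)
      rw [show k-2-1 = k-3 by omega, show k-2-2 = k-4 by omega,
        show k-2-3 = k-5 by omega] at this
      exact_mod_cast this
    have key : (T (k+1) : ℤ)^2 = 2*(T k : ℤ)^2 + 3*(T (k-1) : ℤ)^2
        + 6*(T (k-2) : ℤ)^2 - (T (k-3) : ℤ)^2 - (T (k-5) : ℤ)^2 := by
      rw [hg, ha, hb, hc]; ring
    linarith [ih]
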